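/- Let P be a rendez-vous protocol with no leader such that no edge of E has source q_f, and let N'_P be the Petri net obtained by merging N_P with its reverse at the place p_{q_f}. Then there exists N ∈ ℕ such that C_i^(N) →* C_f^(N) and C_i^(N+1) →* C_f^(N+1) in P if and only if, in N'_P, M^(1) ∈ Reach(M_0) and M_0 ∈ Reach(M^(1)), where M_0 is the zero marking and M^(1) is the marking with one token in p_{q_f} and none elsewhere. -/

import Mathlib

/-- Actions labelling edges of a rendez-vous protocol: request (`recv`, written `?a`)
or answer (`send`, written `!a`). -/
inductive RVAct (A : Type) : Type
  | send : A → RVAct A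
  | recv : A → RVAct A

/-- A rendez-vous protocol with no leader: a finite set of states `Q`, a finite
alphabet `A`, initial and final states, and a set of edges. -/
structure RVNProtocol (Q A : Type) : Type where
  qi : Q
  qf : Q
  E : Set (Q × RVAct A × Q)

namespace RVNProtocol

variable {Q A : Type} [DecidableEq Q] (P : RVNProtocol Q A)

/-- One rendez-vous step between configurations (multisets of states). -/
def Step (C C' : Multiset Q) : Prop :=
  ∃ (a : A) (q1 q2 q1' q2' : Q),
    (q1, RVAct.recv a, q2) ∈ P.E ∧ (q1', RVAct.send a, q2') ∈ P.E ∧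
    0 < C.count q1 ∧ 0 < C.count q1' ∧ 2 ≤ C.count q1 + C.count q1' ∧
    C' = C - {q1, q1'} + {q2, q2'}

/-- Reachability: reflexive-transitive closure of `Step`. -/
def Reach : Multiset Q → Multiset Q → Prop := Relation.ReflTransGen P.Step

/-- The initial configuration with `n` processes: `n` copies of `q_i`. -/
def Ci (n : ℕ) : Multiset Q := Multiset.replicate n P.qi

/-- The final configuration with `n` processes: `n` copies of `q_f`. -/
def Cf (n : ℕ) : Multiset Q := Multiset.replicate n P.qf

end RVNProtocol

namespace RVNProtocol

variable {Q A : Type} [DecidableEq Q] (P : RVNProtocol Q A)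

/-- The places of the merged Petri net `N'_P`: the places `p_q` of `N_P` (`Sum.inl q`)
together with the places `p_q^R` of the reverse net `N_P^R` for `q ≠ q_f` (`Sum.inr`);
the place `p_{q_f}^R` is identified with `p_{q_f}` (see `placeR`). -/
abbrev MergedPlace : Type := Q ⊕ {q : Q // q ≠ P.qf}

/-- The place `p_q^R` of the reverse part of `N'_P`; for `q = q_f` it is the merged place
`p_{q_f}`. -/
def placeR (q : Q) : P.MergedPlace :=
  if h : q = P.qf then Sum.inl P.qf else Sum.inr ⟨q, h⟩

/-- The firing relation of the Petri net `N'_P`, disjoint union of `N_P` (transition `t_i`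
producing a token in `p_{q_i}`, and one transition per pair of edges `(q1,!a,q1')`,
`(q2,?a,q2')` consuming tokens in `p_{q1}, p_{q2}` and producing tokens in
`p_{q1'}, p_{q2'}`) and of its reverse `N_P^R` (all pre/post exchanged, on the reverse
places), where `p_{q_f}` and `p_{q_f}^R` have been merged into the single place
`p_{q_f}`. -/
def MergedStep (M M' : P.MergedPlace → ℕ) : Prop :=
  -- transition `t_i` of `N_P`
  (M' = M + Pi.single (Sum.inl P.qi : P.MergedPlace) 1) ∨
  -- rendez-vous transitions of `N_P`
  (∃ (a : A) (q1 q2 q1' q2' : Q),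
    (q1, RVAct.send a, q1') ∈ P.E ∧ (q2, RVAct.recv a, q2') ∈ P.E ∧
    Pi.single (Sum.inl q1 : P.MergedPlace) 1 + Pi.single (Sum.inl q2 : P.MergedPlace) 1 ≤ M ∧
    M' = M - (Pi.single (Sum.inl q1 : P.MergedPlace) 1
              + Pi.single (Sum.inl q2 : P.MergedPlace) 1)
            + (Pi.single (Sum.inl q1' : P.MergedPlace) 1
              + Pi.single (Sum.inl q2' : P.MergedPlace) 1)) ∨
  -- transition `t_i^R` of `N_P^R`
  (Pi.single (P.placeR P.qi) 1 ≤ M ∧ M' = M - Pi.single (P.placeR P.qi) 1) ∨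
  -- reversed rendez-vous transitions of `N_P^R`
  (∃ (a : A) (q1 q2 q1' q2' : Q),
    (q1, RVAct.send a, q1') ∈ P.E ∧ (q2, RVAct.recv a, q2') ∈ P.E ∧
    Pi.single (P.placeR q1') 1 + Pi.single (P.placeR q2') 1 ≤ M ∧
    M' = M - (Pi.single (P.placeR q1') 1 + Pi.single (P.placeR q2') 1)
            + (Pi.single (P.placeR q1) 1 + Pi.single (P.placeR q2) 1))

/-- Reachability in the merged net `N'_P`. -/
def MergedReach : (P.MergedPlace → ℕ) → (P.MergedPlace → ℕ) → Prop :=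
  Relation.ReflTransGen P.MergedStep

end RVNProtocol

set_option linter.unusedSectionVars false

/-! ### Auxiliary material -/

section MultisetAux
variable {Q : Type} [DecidableEq Q]

lemma RVaux.pair_eq (a b : Q) : ({a, b} : Multiset Q) = {a} + {b} := rfl

lemma RVaux.msub_add_comm {C D X : Multiset Q} (h : D ≤ C) : C + X - D = (C - D) + X := by
  ext q
  have := Multiset.le_iff_count.1 h q
  simp [Multiset.count_sub]
  omega

lemma RVaux.mcard_sub {C D : Multiset Q} (h : D ≤ C) : (C - D).card = C.card - D.card := by
  have h1 := tsub_add_cancel_of_le h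
  have h2 := congrArg Multiset.card h1
  simp [Multiset.card_add] at h2 ⊢
  omega

end MultisetAux

section PiAux
variable {ι Q' : Type} [DecidableEq ι] [DecidableEq Q']

lemma RVaux.pair_card (a b : Q') : ({a, b} : Multiset Q').card = 2 := rfl

lemma RVaux.pi_sub_add_comm {f g r : ι → ℕ} (h : g ≤ f) : f + r - g = (f - g) + r := by
  funext x
  have hx : g x ≤ f x := h x
  simp only [Pi.add_apply, Pi.sub_apply]
  omega

lemma RVaux.pi_add_sub_assoc {f g r : ι → ℕ} (h : g ≤ r) : (f + r) - g = f + (r - g) := by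
  funext x
  have hx : g x ≤ r x := h x
  simp only [Pi.add_apply, Pi.sub_apply]
  omega

end PiAux

namespace RVNProtocol

open RVaux

variable {Q A : Type} [DecidableEq Q] (P : RVNProtocol Q A)

/-- Forward embedding of configurations as markings of `N'_P`. -/
def fwdM (C : Multiset Q) : P.MergedPlace → ℕ
  | Sum.inl q => C.count q
  | Sum.inr _ => 0

/-- Reverse embedding of configurations as markings of `N'_P`. -/
def revM (C : Multiset Q) : P.MergedPlace → ℕ
  | Sum.inl q => if q = P.qf then C.count P.qf else 0
  | Sum.inr x => C.count x.1

lemma fwdM_zero : P.fwdM 0 = 0 := by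
  funext x; cases x <;> simp [fwdM]

lemma revM_zero : P.revM 0 = 0 := by
  funext x; cases x <;> simp [revM]

lemma fwdM_add (C D : Multiset Q) : P.fwdM (C + D) = P.fwdM C + P.fwdM D := by
  funext x; cases x <;> simp [fwdM]

lemma revM_add (C D : Multiset Q) : P.revM (C + D) = P.revM C + P.revM D := by
  funext x
  cases x with
  | inl q => by_cases h : q = P.qf <;> simp [revM, h]
  | inr x => simp [revM]

lemma fwdM_sub (C D : Multiset Q) : P.fwdM (C - D) = P.fwdM C - P.fwdM D := by
  funext x; cases x <;> simp [fwdM, Multiset.count_sub]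

lemma revM_sub (C D : Multiset Q) : P.revM (C - D) = P.revM C - P.revM D := by
  funext x
  cases x with
  | inl q => by_cases h : q = P.qf <;> simp [revM, h, Multiset.count_sub]
  | inr x => simp [revM, Multiset.count_sub]

lemma fwdM_le (C D : Multiset Q) (h : C ≤ D) : P.fwdM C ≤ P.fwdM D := by
  intro x
  cases x with
  | inl q => exact Multiset.le_iff_count.1 h q
  | inr x => simp [fwdM]

lemma revM_le (C D : Multiset Q) (h : C ≤ D) : P.revM C ≤ P.revM D := by
  intro x
  cases x with
  | inl q =>
    by_cases hq : q = P.qf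
    · simpa [revM, hq] using Multiset.le_iff_count.1 h P.qf
    · simp [revM, hq]
  | inr x => exact Multiset.le_iff_count.1 h x.1

lemma fwdM_single (q : Q) : P.fwdM {q} = Pi.single (Sum.inl q : P.MergedPlace) 1 := by
  funext x
  cases x with
  | inl q' =>
    rcases eq_or_ne q' q with h | h
    · subst h; simp [fwdM, Pi.single_apply]
    · simp [fwdM, Pi.single_apply, Multiset.count_singleton, h, Ne.symm h]
  | inr x => simp [fwdM, Pi.single_apply]

lemma revM_single (q : Q) : P.revM {q} = Pi.single (P.placeR q) 1 := by
  funext x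
  cases x with
  | inl q' =>
    by_cases hq : q = P.qf
    · subst hq
      by_cases h : q' = P.qf <;> simp [revM, placeR, Pi.single_apply, h]
    · by_cases h : q' = P.qf <;>
        simp [revM, placeR, Pi.single_apply, h, hq, Multiset.count_singleton, Ne.symm hq]
  | inr x =>
    by_cases hq : q = P.qf
    · subst hq
      simp [revM, placeR, Pi.single_apply, Multiset.count_singleton, x.2]
    · simp only [revM, placeR, hq, dif_neg, Pi.single_apply]
      rcases eq_or_ne x.1 q with h | h
      · have : x = ⟨q, hq⟩ := Subtype.ext h
        simp [this, h]
      · have : x ≠ ⟨q, hq⟩ := fun hc => h (by rw [hc])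
        simp [Multiset.count_singleton, h, this]

lemma fwdM_rep_qf (c : ℕ) :
    P.fwdM (Multiset.replicate c P.qf) = P.revM (Multiset.replicate c P.qf) := by
  funext x
  cases x with
  | inl q =>
    by_cases h : q = P.qf
    · simp [fwdM, revM, h, Multiset.count_replicate]
    · simp only [fwdM, revM, if_neg h, Multiset.count_replicate]
      rw [if_neg (fun hh => h hh.symm)]
  | inr x =>
    simp only [fwdM, revM, Multiset.count_replicate]
    rw [if_neg (fun hh => x.2 hh.symm)]

lemma le_of_fwdM_le {S C D : Multiset Q} (hS : S.count P.qf = 0)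
    (h : P.fwdM S ≤ P.fwdM C + P.revM D) : S ≤ C := by
  rw [Multiset.le_iff_count]
  intro q
  rcases eq_or_ne q P.qf with rfl | hq
  · simp [hS]
  · have := h (Sum.inl q)
    simpa [fwdM, revM, hq] using this

lemma le_of_revM_le {S C D : Multiset Q} (hC : C.count P.qf = 0)
    (h : P.revM S ≤ P.fwdM C + P.revM D) : S ≤ D := by
  rw [Multiset.le_iff_count]
  intro q
  rcases eq_or_ne q P.qf with rfl | hq
  · have := h (Sum.inl P.qf)
    simpa [fwdM, revM, hC] using this
  · have := h (Sum.inr ⟨q, hq⟩)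
    simpa [fwdM, revM] using this

/-- A "good" rendez-vous step: the two interacting processes are genuinely distinct
(the pair multiset is contained in the configuration). -/
def GStep (C C' : Multiset Q) : Prop :=
  ∃ (a : A) (q1 q2 q1' q2' : Q),
    (q1, RVAct.recv a, q2) ∈ P.E ∧ (q1', RVAct.send a, q2') ∈ P.E ∧
    ({q1, q1'} : Multiset Q) ≤ C ∧ C' = C - {q1, q1'} + {q2, q2'}

def GReach : Multiset Q → Multiset Q → Prop := Relation.ReflTransGen P.GStep

lemma GStep.step {C C' : Multiset Q} (h : P.GStep C C') : P.Step C C' := by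
  obtain ⟨a, q1, q2, q1', q2', he1, he2, hle, rfl⟩ := h
  have h1 := Multiset.le_iff_count.1 hle q1
  have h2 := Multiset.le_iff_count.1 hle q1'
  rcases eq_or_ne q1 q1' with h | h
  · subst h
    simp [Multiset.count_cons, Multiset.count_singleton] at h1 h2
    exact ⟨a, q1, q2, q1, q2', he1, he2, by omega, by omega, by omega, rfl⟩
  · simp [Multiset.count_cons, Multiset.count_singleton, h, Ne.symm h] at h1 h2
    exact ⟨a, q1, q2, q1', q2', he1, he2, by omega, by omega, by omega, rfl⟩

lemma GStep.card {C C' : Multiset Q} (h : P.GStep C C') : C'.card = C.card := by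
  obtain ⟨a, q1, q2, q1', q2', he1, he2, hle, rfl⟩ := h
  have hs := RVaux.mcard_sub hle
  have hc : ({q1, q1'} : Multiset Q).card ≤ C.card := Multiset.card_le_card hle
  have e1 : ({q1, q1'} : Multiset Q).card = 2 := by simp
  have e2 : ({q2, q2'} : Multiset Q).card = 2 := by simp
  rw [Multiset.card_add, hs, e1, e2]
  rw [e1] at hc
  omega

lemma GReach.card {C C' : Multiset Q} (h : P.GReach C C') : C'.card = C.card := by
  induction h with
  | refl => rfl
  | tail _ h ih => rw [GStep.card P h, ih]

lemma GStep.add {C C' X : Multiset Q} (h : P.GStep C C') : P.GStep (C + X) (C' + X) := by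
  obtain ⟨a, q1, q2, q1', q2', he1, he2, hle, rfl⟩ := h
  refine ⟨a, q1, q2, q1', q2', he1, he2, le_trans hle (Multiset.le_add_right _ _), ?_⟩
  rw [RVaux.msub_add_comm hle, add_right_comm]

lemma GReach.add {C C' X : Multiset Q} (h : P.GReach C C') : P.GReach (C + X) (C' + X) := by
  induction h with
  | refl => exact Relation.ReflTransGen.refl
  | tail _ h ih => exact ih.tail (GStep.add P h)

lemma Step.card_le {C C' : Multiset Q} (h : P.Step C C') : C.card ≤ C'.card := by
  obtain ⟨a, q1, q2, q1', q2', he1, he2, h1, h2, h3, rfl⟩ := h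
  have hle : C ≤ C - {q1, q1'} + {q1, q1'} := le_tsub_add
  have hc := Multiset.card_le_card hle
  have e1 : ({q1, q1'} : Multiset Q).card = 2 := by simp
  have e2 : ({q2, q2'} : Multiset Q).card = 2 := by simp
  rw [Multiset.card_add, e1] at hc
  rw [Multiset.card_add, e2]
  omega

lemma Step.gstep_of_card {C C' : Multiset Q} (h : P.Step C C') (hcard : C'.card ≤ C.card) :
    P.GStep C C' := by
  obtain ⟨a, q1, q2, q1', q2', he1, he2, h1, h2, h3, rfl⟩ := h
  by_cases hle : ({q1, q1'} : Multiset Q) ≤ C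
  · exact ⟨a, q1, q2, q1', q2', he1, he2, hle, rfl⟩
  · exfalso
    -- from ¬ ≤ derive q1 = q1' with count 1
    rw [Multiset.le_iff_count] at hle
    push_neg at hle
    obtain ⟨q, hq⟩ := hle
    have hq1 : q = q1 ∧ q = q1' := by
      rcases eq_or_ne q q1 with rfl | h
      · rcases eq_or_ne q q1' with rfl | h'
        · exact ⟨rfl, rfl⟩
        · exfalso
          have hcnt : Multiset.count q ({q, q1'} : Multiset Q) = 1 := by
            simp [Multiset.count_cons, Multiset.count_singleton, h']
          omega
      · rcases eq_or_ne q q1' with rfl | h'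
        · exfalso
          have hcnt : Multiset.count q ({q1, q} : Multiset Q) = 1 := by
            simp [Multiset.count_cons, Multiset.count_singleton, h]
          omega
        · exfalso
          have hcnt : Multiset.count q ({q1, q1'} : Multiset Q) = 0 := by
            simp [Multiset.count_cons, Multiset.count_singleton, h, h']
          omega
    obtain ⟨rfl, hqq⟩ := hq1
    subst hqq
    have hc2 : Multiset.count q ({q, q} : Multiset Q) = 2 := by
      simp [Multiset.count_cons, Multiset.count_singleton]
    have hcq : C.count q = 1 := by omega
    -- C - {q, q} = C - {q}
    have hsub : C - {q, q} = C - {q} := by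
      ext x
      rcases eq_or_ne x q with rfl | h
      · simp [Multiset.count_sub, Multiset.count_cons, Multiset.count_singleton, hcq]
      · simp [Multiset.count_sub, Multiset.count_cons, Multiset.count_singleton, h]
    have hqC : ({q} : Multiset Q) ≤ C := by
      rw [Multiset.singleton_le]
      exact Multiset.count_pos.1 h1
    have h4 := RVaux.mcard_sub hqC
    have h5 : 1 ≤ C.card := by
      simpa using Multiset.card_le_card hqC
    have e2 : ({q2, q2'} : Multiset Q).card = 2 := by simp
    rw [Multiset.card_add, hsub, h4, e2, Multiset.card_singleton] at hcard
    omega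

lemma Reach.card_le {C C' : Multiset Q} (h : P.Reach C C') : C.card ≤ C'.card := by
  induction h with
  | refl => exact le_refl _
  | tail _ h ih => exact le_trans ih (Step.card_le P h)

lemma Reach.greach {C C' : Multiset Q} (h : P.Reach C C') (hcard : C'.card = C.card) :
    P.GReach C C' := by
  induction h with
  | refl => exact Relation.ReflTransGen.refl
  | @tail E F hCE hEF ih =>
    have h1 : C.card ≤ E.card := Reach.card_le P hCE
    have h2 : E.card ≤ F.card := Step.card_le P hEF
    have hEq : E.card = C.card := by omega
    exact (ih hEq).tail (Step.gstep_of_card P hEF (by omega))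

lemma GReach.reach {C C' : Multiset Q} (h : P.GReach C C') : P.Reach C C' :=
  Relation.ReflTransGen.mono (fun _ _ hs => GStep.step P hs) _ _ h

end RVNProtocol

namespace RVNProtocol

open RVaux

variable {Q A : Type} [DecidableEq Q] (P : RVNProtocol Q A)

lemma rep_succ (a : Q) (n : ℕ) :
    Multiset.replicate (n + 1) a = Multiset.replicate n a + {a} := by
  rw [Multiset.replicate_succ, ← Multiset.singleton_add, add_comm]

lemma Ci_succ (n : ℕ) : P.Ci (n + 1) = P.Ci n + {P.qi} := rep_succ P.qi n

lemma ne_qf_of_edge (hqf : ∀ (act : RVAct A) (q' : Q), (P.qf, act, q') ∉ P.E)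
    {q : Q} {act : RVAct A} {q' : Q} (h : (q, act, q') ∈ P.E) : q ≠ P.qf :=
  fun hq => hqf act q' (hq ▸ h)

lemma gstep_strip (hqf : ∀ (act : RVAct A) (q' : Q), (P.qf, act, q') ∉ P.E)
    {C D : Multiset Q} (h : P.GStep (C + {P.qf}) D) :
    ∃ D', D = D' + {P.qf} ∧ P.GStep C D' := by
  obtain ⟨a, q1, q2, q1', q2', he1, he2, hle, rfl⟩ := h
  have h1 : q1 ≠ P.qf := ne_qf_of_edge P hqf he1
  have h1' : q1' ≠ P.qf := ne_qf_of_edge P hqf he2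
  have hpair : ({q1, q1'} : Multiset Q) ≤ C := by
    rw [Multiset.le_iff_count]
    intro q
    have hq := Multiset.le_iff_count.1 hle q
    rcases eq_or_ne q P.qf with rfl | hne
    · have : Multiset.count P.qf ({q1, q1'} : Multiset Q) = 0 := by
        simp [Multiset.count_cons, Multiset.count_singleton, Ne.symm h1, Ne.symm h1']
      omega
    · have : Multiset.count q (C + {P.qf}) = Multiset.count q C := by
        simp [Multiset.count_singleton, hne]
      omega
  refine ⟨C - {q1, q1'} + {q2, q2'}, ?_, a, q1, q2, q1', q2', he1, he2, hpair, rfl⟩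
  rw [RVaux.msub_add_comm hpair, add_right_comm]

lemma greach_strip (hqf : ∀ (act : RVAct A) (q' : Q), (P.qf, act, q') ∉ P.E)
    {X E : Multiset Q} (h : P.GReach X E) :
    ∀ C, X = C + {P.qf} → ∃ E', E = E' + {P.qf} ∧ P.GReach C E' := by
  induction h using Relation.ReflTransGen.head_induction_on with
  | refl => exact fun C hC => ⟨C, hC, Relation.ReflTransGen.refl⟩
  | head hstep _ ih =>
    intro C hC
    subst hC
    obtain ⟨B', rfl, hCB⟩ := gstep_strip P hqf hstep
    obtain ⟨E', hE, hBE⟩ := ih B' rfl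
    exact ⟨E', hE, Relation.ReflTransGen.head hCB hBE⟩

/-! ### Simulation lemmas for the merged net -/

lemma fwd_update {C S S' : Multiset Q} (hS : S ≤ C) (R : P.MergedPlace → ℕ) :
    (P.fwdM C + R) - P.fwdM S + P.fwdM S' = P.fwdM (C - S + S') + R := by
  rw [RVaux.pi_sub_add_comm (P.fwdM_le _ _ hS), ← fwdM_sub, add_right_comm, ← fwdM_add]

lemma rev_update {D S S' : Multiset Q} (hS : S ≤ D) (R : P.MergedPlace → ℕ) :
    (R + P.revM D) - P.revM S + P.revM S' = R + P.revM (D - S + S') := by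
  rw [RVaux.pi_add_sub_assoc (P.revM_le _ _ hS), ← revM_sub, add_assoc, ← revM_add]

lemma mreach_ti (n : ℕ) (R : P.MergedPlace → ℕ) :
    P.MergedReach R (P.fwdM (P.Ci n) + R) := by
  induction n with
  | zero =>
    have : P.fwdM (P.Ci 0) + R = R := by
      show P.fwdM 0 + R = R
      rw [fwdM_zero, zero_add]
    rw [this]
    exact Relation.ReflTransGen.refl
  | succ n ih =>
    refine ih.tail ?_
    left
    rw [Ci_succ, fwdM_add, fwdM_single, add_right_comm]

lemma mstep_fwd {C C' : Multiset Q} (h : P.GStep C C') (R : P.MergedPlace → ℕ) :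
    P.MergedStep (P.fwdM C + R) (P.fwdM C' + R) := by
  obtain ⟨a, q1, q2, q1', q2', he1, he2, hle, rfl⟩ := h
  right; left
  refine ⟨a, q1', q1, q2', q2, he2, he1, ?_, ?_⟩
  · rw [← fwdM_single, ← fwdM_single, ← fwdM_add]
    have e1 : ({q1'} + {q1} : Multiset Q) = {q1, q1'} := by rw [add_comm]; rfl
    rw [e1]
    exact le_trans (P.fwdM_le _ _ hle) (self_le_add_right _ _)
  · rw [← P.fwdM_single q1', ← P.fwdM_single q1, ← fwdM_add, ← P.fwdM_single q2',
      ← P.fwdM_single q2, ← fwdM_add]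
    have e1 : ({q1'} + {q1} : Multiset Q) = {q1, q1'} := by rw [add_comm]; rfl
    have e2 : ({q2'} + {q2} : Multiset Q) = {q2, q2'} := by rw [add_comm]; rfl
    rw [e1, e2, fwd_update P hle]

lemma mreach_fwd {C C' : Multiset Q} (h : P.GReach C C') (R : P.MergedPlace → ℕ) :
    P.MergedReach (P.fwdM C + R) (P.fwdM C' + R) := by
  induction h with
  | refl => exact Relation.ReflTransGen.refl
  | tail _ hstep ih => exact ih.tail (mstep_fwd P hstep R)

lemma mstep_rev {C C' : Multiset Q} (h : P.GStep C C') (R : P.MergedPlace → ℕ) :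
    P.MergedStep (P.revM C' + R) (P.revM C + R) := by
  obtain ⟨a, q1, q2, q1', q2', he1, he2, hle, rfl⟩ := h
  right; right; right
  refine ⟨a, q1', q1, q2', q2, he2, he1, ?_, ?_⟩
  · rw [← revM_single, ← revM_single, ← revM_add]
    have e2 : ({q2'} + {q2} : Multiset Q) = {q2, q2'} := by rw [add_comm]; rfl
    rw [e2]
    refine le_trans (P.revM_le _ _ ?_) (self_le_add_right _ _)
    exact le_add_self
  · rw [← P.revM_single q2', ← P.revM_single q2, ← revM_add, ← P.revM_single q1',
      ← P.revM_single q1, ← revM_add]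
    have e1 : ({q1'} + {q1} : Multiset Q) = {q1, q1'} := by rw [add_comm]; rfl
    have e2 : ({q2'} + {q2} : Multiset Q) = {q2, q2'} := by rw [add_comm]; rfl
    rw [e1, e2]
    rw [add_comm (P.revM (C - {q1, q1'} + {q2, q2'})) R, rev_update P (le_add_self) R,
      add_tsub_cancel_right, tsub_add_cancel_of_le hle, add_comm]

lemma mreach_rev {C C' : Multiset Q} (h : P.GReach C C') (R : P.MergedPlace → ℕ) :
    P.MergedReach (P.revM C' + R) (P.revM C + R) := by
  induction h with
  | refl => exact Relation.ReflTransGen.refl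
  | tail _ hstep ih => exact Relation.ReflTransGen.head (mstep_rev P hstep R) ih

lemma mreach_tiR (n : ℕ) (R : P.MergedPlace → ℕ) :
    P.MergedReach (P.revM (P.Ci n) + R) R := by
  induction n with
  | zero =>
    have : P.revM (P.Ci 0) + R = R := by
      show P.revM 0 + R = R
      rw [revM_zero, zero_add]
    rw [this]
    exact Relation.ReflTransGen.refl
  | succ n ih =>
    refine Relation.ReflTransGen.head ?_ ih
    right; right; left
    have hle : ({P.qi} : Multiset Q) ≤ P.Ci (n + 1) := by
      rw [Ci_succ]
      exact le_add_self
    constructor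
    · rw [← revM_single]
      exact le_trans (P.revM_le _ _ hle) (self_le_add_right _ _)
    · rw [← revM_single, RVaux.pi_sub_add_comm (P.revM_le _ _ hle), ← revM_sub, Ci_succ,
        add_tsub_cancel_right]

end RVNProtocol

namespace RVNProtocol

open RVaux

variable {Q A : Type} [DecidableEq Q] (P : RVNProtocol Q A)

lemma transfer (C D : Multiset Q) (k : ℕ) :
    ∃ (C₂ D₂ : Multiset Q) (c : ℕ), C₂.count P.qf = 0 ∧
      P.fwdM C + P.revM D = P.fwdM C₂ + P.revM D₂ ∧
      C + Multiset.replicate k P.qf = C₂ + Multiset.replicate (k + c) P.qf ∧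
      D₂ = D + Multiset.replicate c P.qf := by
  set c := C.count P.qf with hc
  have hrep : Multiset.replicate c P.qf ≤ C := Multiset.le_count_iff_replicate_le.1 (le_refl _)
  refine ⟨C - Multiset.replicate c P.qf, D + Multiset.replicate c P.qf, c, ?_, ?_, ?_, rfl⟩
  · simp [Multiset.count_sub, Multiset.count_replicate, hc]
  · have hCeq : C = (C - Multiset.replicate c P.qf) + Multiset.replicate c P.qf :=
      (tsub_add_cancel_of_le hrep).symm
    calc P.fwdM C + P.revM D
        = P.fwdM (C - Multiset.replicate c P.qf) + P.fwdM (Multiset.replicate c P.qf)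
            + P.revM D := by rw [← fwdM_add, ← hCeq]
      _ = P.fwdM (C - Multiset.replicate c P.qf) + P.revM (Multiset.replicate c P.qf)
            + P.revM D := by rw [fwdM_rep_qf]
      _ = P.fwdM (C - Multiset.replicate c P.qf) + P.revM (D + Multiset.replicate c P.qf) := by
            rw [revM_add, add_assoc, add_comm (P.revM (Multiset.replicate c P.qf))]
  · have hCeq : C = (C - Multiset.replicate c P.qf) + Multiset.replicate c P.qf :=
      (tsub_add_cancel_of_le hrep).symm
    calc C + Multiset.replicate k P.qf
        = (C - Multiset.replicate c P.qf) + (Multiset.replicate c P.qf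
            + Multiset.replicate k P.qf) := by rw [← add_assoc, ← hCeq]
      _ = (C - Multiset.replicate c P.qf) + Multiset.replicate (k + c) P.qf := by
            rw [← Multiset.replicate_add, Nat.add_comm c k]

/-- The invariant maintained along any run of `N'_P` from the empty marking. -/
def Inv (M : P.MergedPlace → ℕ) : Prop :=
  ∃ (n j k : ℕ) (C D : Multiset Q),
    M = P.fwdM C + P.revM D ∧
    P.GReach (P.Ci n) (C + Multiset.replicate k P.qf) ∧
    P.GReach (D + P.Ci j) (Multiset.replicate k P.qf)

lemma inv_step (hqf : ∀ (act : RVAct A) (q' : Q), (P.qf, act, q') ∉ P.E)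
    {M M' : P.MergedPlace → ℕ} (h : P.MergedStep M M') (hM : P.Inv M) : P.Inv M' := by
  obtain ⟨n, j, k, C, D, rfl, h2, h3⟩ := hM
  rcases h with h | ⟨a, q1, q2, q1', q2', he1, he2, hpre, hM'⟩ |
    ⟨hpre, hM'⟩ | ⟨a, q1, q2, q1', q2', he1, he2, hpre, hM'⟩
  -- case t_i
  · refine ⟨n + 1, j, k, C + {P.qi}, D, ?_, ?_, h3⟩
    · rw [h, ← P.fwdM_single P.qi, fwdM_add, add_right_comm]
    · rw [Ci_succ]
      have := GReach.add P (X := {P.qi}) h2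
      rwa [add_right_comm] at this
  -- case forward rendez-vous
  · have hq1 : q1 ≠ P.qf := ne_qf_of_edge P hqf he1
    have hq2 : q2 ≠ P.qf := ne_qf_of_edge P hqf he2
    have hpre' : P.fwdM ({q1} + {q2}) ≤ P.fwdM C + P.revM D := by
      rwa [fwdM_add, P.fwdM_single, P.fwdM_single]
    have hS : ({q1} + {q2} : Multiset Q) ≤ C := by
      refine P.le_of_fwdM_le ?_ hpre'
      simp [Multiset.count_singleton, Ne.symm hq1, Ne.symm hq2]
    have hSpair : ({q2, q1} : Multiset Q) = {q1} + {q2} := by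
      rw [RVaux.pair_eq, add_comm]
    have hgs : P.GStep C (C - ({q1} + {q2}) + ({q1'} + {q2'})) := by
      refine ⟨a, q2, q2', q1, q1', he2, he1, ?_, ?_⟩
      · rw [hSpair]; exact hS
      · rw [hSpair]
        congr 1
        rw [RVaux.pair_eq, add_comm]
    refine ⟨n, j, k, C - ({q1} + {q2}) + ({q1'} + {q2'}), D, ?_, ?_, h3⟩
    · rw [hM', ← P.fwdM_single q1, ← P.fwdM_single q2, ← fwdM_add,
        ← P.fwdM_single q1', ← P.fwdM_single q2', ← fwdM_add, fwd_update P hS]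
    · exact h2.tail (GStep.add P hgs)
  -- case t_i^R
  · obtain ⟨C₂, D₂, c, hC₂0, hmark, hCk, hD₂⟩ := P.transfer C D k
    have h2' : P.GReach (P.Ci n) (C₂ + Multiset.replicate (k + c) P.qf) := by rwa [hCk] at h2
    have h3' : P.GReach (D₂ + P.Ci j) (Multiset.replicate (k + c) P.qf) := by
      have := GReach.add P (X := Multiset.replicate c P.qf) h3
      rw [← Multiset.replicate_add] at this
      rwa [hD₂, add_right_comm]
    rw [hmark] at hpre hM'
    have hqiD : ({P.qi} : Multiset Q) ≤ D₂ := by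
      refine P.le_of_revM_le hC₂0 ?_
      rwa [P.revM_single]
    refine ⟨n, j + 1, k + c, C₂, D₂ - {P.qi}, ?_, h2', ?_⟩
    · rw [hM', ← P.revM_single P.qi,
        RVaux.pi_add_sub_assoc (P.revM_le _ _ hqiD), ← revM_sub]
    · have heq : D₂ - {P.qi} + P.Ci (j + 1) = D₂ + P.Ci j := by
        rw [Ci_succ, add_comm (P.Ci j) {P.qi}, ← add_assoc, tsub_add_cancel_of_le hqiD]
      rw [heq]
      exact h3'
  -- case reverse rendez-vous
  · obtain ⟨C₂, D₂, c, hC₂0, hmark, hCk, hD₂⟩ := P.transfer C D k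
    have h2' : P.GReach (P.Ci n) (C₂ + Multiset.replicate (k + c) P.qf) := by rwa [hCk] at h2
    have h3' : P.GReach (D₂ + P.Ci j) (Multiset.replicate (k + c) P.qf) := by
      have := GReach.add P (X := Multiset.replicate c P.qf) h3
      rw [← Multiset.replicate_add] at this
      rwa [hD₂, add_right_comm]
    rw [hmark] at hpre hM'
    have hpre' : P.revM ({q1'} + {q2'}) ≤ P.fwdM C₂ + P.revM D₂ := by
      rwa [revM_add, P.revM_single, P.revM_single]
    have hS : ({q1'} + {q2'} : Multiset Q) ≤ D₂ := P.le_of_revM_le hC₂0 hpre'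
    set Dnew := D₂ - ({q1'} + {q2'}) + ({q1} + {q2}) with hDnew
    have hgs : P.GStep Dnew D₂ := by
      refine ⟨a, q2, q2', q1, q1', he2, he1, ?_, ?_⟩
      · rw [show ({q2, q1} : Multiset Q) = {q1} + {q2} by rw [RVaux.pair_eq, add_comm]]
        exact le_add_self
      · rw [show ({q2, q1} : Multiset Q) = {q1} + {q2} by rw [RVaux.pair_eq, add_comm],
          show ({q2', q1'} : Multiset Q) = {q1'} + {q2'} by rw [RVaux.pair_eq, add_comm],
          hDnew, add_tsub_cancel_right, tsub_add_cancel_of_le hS]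
    refine ⟨n, j, k + c, C₂, Dnew, ?_, h2', ?_⟩
    · rw [hM', ← P.revM_single q1', ← P.revM_single q2', ← revM_add,
        ← P.revM_single q1, ← P.revM_single q2, ← revM_add, rev_update P hS]
    · exact Relation.ReflTransGen.head (GStep.add P hgs) h3'

lemma inv_of_reach (hqf : ∀ (act : RVAct A) (q' : Q), (P.qf, act, q') ∉ P.E)
    {M : P.MergedPlace → ℕ} (h : P.MergedReach (fun _ => 0) M) : P.Inv M := by
  induction h with
  | refl =>
    refine ⟨0, 0, 0, 0, 0, ?_, ?_, ?_⟩
    · rw [fwdM_zero, revM_zero, add_zero]; rfl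
    · have : (P.Ci 0 : Multiset Q) = 0 + Multiset.replicate 0 P.qf := by simp [Ci]
      rw [← this]
      exact Relation.ReflTransGen.refl
    · have : ((0 : Multiset Q) + P.Ci 0) = Multiset.replicate 0 P.qf := by simp [Ci]
      rw [this]
      exact Relation.ReflTransGen.refl
  | tail _ hstep ih => exact P.inv_step hqf hstep ih

end RVNProtocol

namespace RVNProtocol

open RVaux

variable {Q A : Type} [DecidableEq Q] (P : RVNProtocol Q A)

lemma placeR_qf : P.placeR P.qf = Sum.inl P.qf := dif_pos rfl

lemma fwdM_Cf (m : ℕ) : P.fwdM (P.Cf m) = P.revM (P.Cf m) := P.fwdM_rep_qf m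

lemma revM_Cf_succ (m : ℕ) :
    P.revM (P.Cf (m + 1)) =
      P.revM (P.Cf m) + Pi.single (Sum.inl P.qf : P.MergedPlace) 1 := by
  rw [Cf, Cf, rep_succ, revM_add, P.revM_single, placeR_qf]

lemma card_Ci (m : ℕ) : (P.Ci m).card = m := Multiset.card_replicate _ _

end RVNProtocol

/-- For a rendez-vous protocol with no leader in which no edge has source
`q_f`: there is an `N` with `C_i^{(N)} →* C_f^{(N)}` and `C_i^{(N+1)} →* C_f^{(N+1)}` iff,
in the merged net `N'_P`, the marking `M^{(1)}` (one token in `p_{q_f}`, none elsewhere) is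
reachable from the zero marking `M_0` and conversely `M_0` is reachable from `M^{(1)}`. -/
theorem noleader_two_consecutive_iff_reversible_reach {Q A : Type} [Fintype Q] [Fintype A]
    [DecidableEq Q] (P : RVNProtocol Q A)
    (hqf : ∀ (act : RVAct A) (q' : Q), (P.qf, act, q') ∉ P.E) :
    (∃ N : ℕ, P.Reach (P.Ci N) (P.Cf N) ∧ P.Reach (P.Ci (N + 1)) (P.Cf (N + 1))) ↔
    (P.MergedReach (fun _ => 0) (Pi.single (Sum.inl P.qf : P.MergedPlace) 1) ∧
     P.MergedReach (Pi.single (Sum.inl P.qf : P.MergedPlace) 1) (fun _ => 0)) := by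
  
  open RVNProtocol RVaux in
  constructor
  · rintro ⟨N, hN, hN1⟩
    have gN : P.GReach (P.Ci N) (P.Cf N) :=
      RVNProtocol.Reach.greach P hN (by simp [RVNProtocol.Ci, RVNProtocol.Cf])
    have gN1 : P.GReach (P.Ci (N + 1)) (P.Cf (N + 1)) :=
      RVNProtocol.Reach.greach P hN1 (by simp [RVNProtocol.Ci, RVNProtocol.Cf])
    constructor
    · -- M₀ →* M¹
      have s1 := P.mreach_ti (N + 1) (0 : P.MergedPlace → ℕ)
      rw [add_zero] at s1
      have s2 := P.mreach_fwd gN1 (0 : P.MergedPlace → ℕ)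
      rw [add_zero, add_zero] at s2
      have s3 := P.mreach_rev gN (Pi.single (Sum.inl P.qf : P.MergedPlace) 1)
      have s4 := P.mreach_tiR N (Pi.single (Sum.inl P.qf : P.MergedPlace) 1)
      have e : P.fwdM (P.Cf (N + 1)) =
          P.revM (P.Cf N) + Pi.single (Sum.inl P.qf : P.MergedPlace) 1 := by
        rw [P.fwdM_Cf, P.revM_Cf_succ]
      rw [← e] at s3
      exact (s1.trans s2).trans (s3.trans s4)
    · -- M¹ →* M₀
      have s1 := P.mreach_ti N (Pi.single (Sum.inl P.qf : P.MergedPlace) 1)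
      have s2 := P.mreach_fwd gN (Pi.single (Sum.inl P.qf : P.MergedPlace) 1)
      have s3 := P.mreach_rev gN1 (0 : P.MergedPlace → ℕ)
      rw [add_zero, add_zero] at s3
      have s4 := P.mreach_tiR (N + 1) (0 : P.MergedPlace → ℕ)
      rw [add_zero] at s4
      have e : P.fwdM (P.Cf N) + Pi.single (Sum.inl P.qf : P.MergedPlace) 1 =
          P.revM (P.Cf (N + 1)) := by
        rw [P.fwdM_Cf, P.revM_Cf_succ]
      rw [e] at s2
      exact (s1.trans s2).trans (s3.trans s4)
  · rintro ⟨h1, -⟩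
    obtain ⟨n, j, k, C, D, hM, h2, h3⟩ := P.inv_of_reach hqf h1
    obtain ⟨C₂, D₂, c, hC₂0, hmark, hCk, hD₂d⟩ := P.transfer C D k
    rw [hmark] at hM
    have h2' : P.GReach (P.Ci n) (C₂ + Multiset.replicate (k + c) P.qf) := by rwa [hCk] at h2
    have h3' : P.GReach (D₂ + P.Ci j) (Multiset.replicate (k + c) P.qf) := by
      have := RVNProtocol.GReach.add P (X := Multiset.replicate c P.qf) h3
      rw [← Multiset.replicate_add] at this
      rwa [hD₂d, add_right_comm]
    have hC2 : C₂ = 0 := by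
      ext q
      rcases eq_or_ne q P.qf with rfl | hq
      · simpa using hC₂0
      · have := congrFun hM (Sum.inl q)
        simp [RVNProtocol.fwdM, RVNProtocol.revM, Pi.single_apply, hq] at this
        simp [this]
    have hD2 : D₂ = {P.qf} := by
      ext q
      rcases eq_or_ne q P.qf with rfl | hq
      · have := congrFun hM (Sum.inl P.qf)
        simp [RVNProtocol.fwdM, RVNProtocol.revM, Pi.single_apply, hC₂0] at this
        simp [Multiset.count_singleton]
        omega
      · have := congrFun hM (Sum.inr ⟨q, hq⟩)
        simp [RVNProtocol.fwdM, RVNProtocol.revM, Pi.single_apply] at this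
        simp [Multiset.count_singleton, hq, this]
    rw [hC2, zero_add] at h2'
    rw [hD2] at h3'
    have hn : k + c = n := by
      have := RVNProtocol.GReach.card P h2'
      simpa [RVNProtocol.Ci] using this
    have hj : k + c = j + 1 := by
      have := RVNProtocol.GReach.card P h3'
      simpa [RVNProtocol.Ci] using this
    have h3'' : P.GReach (P.Ci j + {P.qf}) (Multiset.replicate (k + c) P.qf) := by
      rwa [add_comm] at h3'
    obtain ⟨E', hE, hrun⟩ := RVNProtocol.greach_strip P hqf h3'' (P.Ci j) rfl
    have hkc : k + c = j + 1 := by omega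
    have hE' : E' = Multiset.replicate j P.qf := by
      have hh : Multiset.replicate (j + 1) P.qf = E' + {P.qf} := by rw [← hkc]; exact hE
      rw [RVNProtocol.rep_succ] at hh
      exact (add_right_cancel hh.symm)
    refine ⟨j, ?_, ?_⟩
    · have := RVNProtocol.GReach.reach P hrun
      rwa [hE'] at this
    · have := RVNProtocol.GReach.reach P h2'
      have hrw : Multiset.replicate (k + c) P.qf = P.Cf (j + 1) := by rw [hkc]; rfl
      have hnn : n = j + 1 := by omega
      rw [hrw, hnn] at this
      exact this
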